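/- (Impossibility of a single distance under non-divisibility) Let N ≥ 1, let A be a finite alphabet with multiplicities m : A → ℕ satisfying m(a) ≥ 1 for all a and ∑_{a∈A} m(a) = N, and let C : ZMod N → A be an admissible cycle. If a ∈ A is a symbol with m(a) ∤ N, then there is no single value d such that Δ_C(j) = d for all positions j with C(j) = a; at least two distinct distance values must occur among the instances of a. -/
import Mathlib


open Finset

/-- The distance from position `j` to the next occurrence of the same symbol:
the least positive `d` with `C (j + d) = C j`. -/
noncomputable def cycleDist {N : ℕ} {A : Type*} (C : ZMod N → A) (j : ZMod N) : ℕ :=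
  sInf {d : ℕ | 0 < d ∧ C (j + (d : ZMod N)) = C j}

/-- A cycle is admissible for multiplicities `m` if every fiber has the prescribed size. -/
def Admissible {N : ℕ} [NeZero N] {A : Type*} [Fintype A] [DecidableEq A]
    (m : A → ℕ) (C : ZMod N → A) : Prop :=
  ∀ a : A, (Finset.univ.filter (fun j => C j = a)).card = m a

/-- The mean of a cycle. -/
noncomputable def cycleMean {N : ℕ} [NeZero N] {A : Type*} (C : ZMod N → A) : ℚ :=
  (∑ j : ZMod N, (cycleDist C j : ℚ)) / N

/-- The second (raw) moment of a cycle. -/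
noncomputable def cycleMoment2 {N : ℕ} [NeZero N] {A : Type*} (C : ZMod N → A) : ℚ :=
  (∑ j : ZMod N, (cycleDist C j : ℚ) ^ 2) / N

/-- The variance of a cycle. -/
noncomputable def cycleVariance {N : ℕ} [NeZero N] {A : Type*} (C : ZMod N → A) : ℚ :=
  (∑ j : ZMod N, ((cycleDist C j : ℚ) - cycleMean C) ^ 2) / N

section Aux

variable {N : ℕ} [NeZero N] {A : Type*}

lemma cycleDist_mem (C : ZMod N → A) (j : ZMod N) :
    0 < cycleDist C j ∧ C (j + (cycleDist C j : ZMod N)) = C j := by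
  have h : N ∈ {d : ℕ | 0 < d ∧ C (j + (d : ZMod N)) = C j} := by
    refine ⟨Nat.pos_of_ne_zero (NeZero.ne N), ?_⟩
    simp [ZMod.natCast_self]
  exact Nat.sInf_mem ⟨N, h⟩

lemma cycleDist_pos (C : ZMod N → A) (j : ZMod N) : 0 < cycleDist C j :=
  (cycleDist_mem C j).1

lemma cycleDist_spec (C : ZMod N → A) (j : ZMod N) :
    C (j + (cycleDist C j : ZMod N)) = C j :=
  (cycleDist_mem C j).2

lemma cycleDist_le (C : ZMod N → A) (j : ZMod N) : cycleDist C j ≤ N := by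
  have h : N ∈ {d : ℕ | 0 < d ∧ C (j + (d : ZMod N)) = C j} := by
    exact ⟨Nat.pos_of_ne_zero (NeZero.ne N), by simp [ZMod.natCast_self]⟩
  exact Nat.sInf_le h

lemma cycleDist_min (C : ZMod N → A) (j : ZMod N) {t : ℕ} (ht : 0 < t)
    (htd : t < cycleDist C j) : C (j + (t : ZMod N)) ≠ C j := by
  intro h
  have hmem : t ∈ {d : ℕ | 0 < d ∧ C (j + (d : ZMod N)) = C j} := ⟨ht, h⟩
  exact absurd (Nat.sInf_le hmem) (not_le_of_gt htd)

lemma sum_cycleDist [DecidableEq A] (C : ZMod N → A) (a : A) (hne : ∃ j, C j = a) :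
    ∑ j ∈ Finset.univ.filter (fun j => C j = a), cycleDist C j = N := by
  classical
  set S := Finset.univ.filter (fun j => C j = a) with hS
  have hcard : ∑ j ∈ S, cycleDist C j
      = (S.sigma (fun j => Finset.range (cycleDist C j))).card := by
    rw [Finset.card_sigma]
    simp
  rw [hcard]
  have key : ∀ (j j' : ZMod N) (t t' : ℕ), C j = a → C j' = a →
      t < cycleDist C j → t' < cycleDist C j' → t ≤ t' →
      j + (t : ZMod N) = j' + (t' : ZMod N) → j = j' ∧ t = t' := by
    intro j j' t t' hj hj' htj htj' hle heq
    rcases Nat.eq_or_lt_of_le hle with h | h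
    · subst h
      exact ⟨by exact add_right_cancel heq, rfl⟩
    · exfalso
      have hsub : ((t' - t : ℕ) : ZMod N) = (t' : ZMod N) - (t : ZMod N) := by
        push_cast [Nat.cast_sub hle]; ring
      have hjj : j' + ((t' - t : ℕ) : ZMod N) = j := by
        rw [hsub]; linear_combination -heq
      have hpos : 0 < t' - t := Nat.sub_pos_of_lt h
      have hlt : t' - t < cycleDist C j' := lt_of_le_of_lt (Nat.sub_le _ _) htj'
      exact cycleDist_min C j' hpos hlt (by rw [hjj, hj, hj'])
  have : (S.sigma (fun j => Finset.range (cycleDist C j))).card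
      = (Finset.univ : Finset (ZMod N)).card := by
    apply Finset.card_bij (fun p _ => p.1 + (p.2 : ZMod N))
    · intros; exact Finset.mem_univ _
    · rintro ⟨j, t⟩ hjt ⟨j', t'⟩ hjt' heq
      simp only [Finset.mem_sigma, hS, Finset.mem_filter, Finset.mem_range] at hjt hjt'
      obtain ⟨⟨-, hj⟩, ht⟩ := hjt
      obtain ⟨⟨-, hj'⟩, ht'⟩ := hjt'
      rcases le_total t t' with hle | hle
      · obtain ⟨h1, h2⟩ := key j j' t t' hj hj' ht ht' hle heq
        simp [h1, h2]
      · obtain ⟨h1, h2⟩ := key j' j t' t hj' hj ht' ht hle heq.symm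
        simp [h1, h2]
    · intro b _
      obtain ⟨j0, hj0⟩ := hne
      have hsetne : {s : ℕ | C (b - (s : ZMod N)) = a}.Nonempty := by
        refine ⟨(b - j0).val, ?_⟩
        simp only [Set.mem_setOf_eq, ZMod.natCast_val, ZMod.cast_id]
        simpa using hj0
      set s := sInf {s : ℕ | C (b - (s : ZMod N)) = a} with hs
      have hsmem : C (b - (s : ZMod N)) = a := Nat.sInf_mem hsetne
      set j := b - (s : ZMod N) with hjdef
      have hslt : s < cycleDist C j := by
        by_contra hle
        push_neg at hle
        have hd := cycleDist_spec C j
        have : C (b - ((s - cycleDist C j : ℕ) : ZMod N)) = a := by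
          have : b - ((s - cycleDist C j : ℕ) : ZMod N) = j + (cycleDist C j : ZMod N) := by
            rw [hjdef, Nat.cast_sub hle]; ring
          rw [this, hd, hsmem]
        have hinf := Nat.sInf_le (show (s - cycleDist C j) ∈ {s : ℕ | C (b - (s : ZMod N)) = a} from this)
        rw [← hs] at hinf
        have := cycleDist_pos C j
        omega
      refine ⟨⟨j, s⟩, ?_, ?_⟩
      · simp only [Finset.mem_sigma, hS, Finset.mem_filter, Finset.mem_range]
        exact ⟨⟨Finset.mem_univ _, hsmem⟩, hslt⟩
      · simp [hjdef]
  rw [this, Finset.card_univ, ZMod.card]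

end Aux

/-- If `m a ∤ N`, no single distance value can serve all instances of `a`:
at least two distinct distance values occur. -/
theorem no_single_distance {N : ℕ} [NeZero N] {A : Type*} [Fintype A] [DecidableEq A]
    (m : A → ℕ) (hm : ∀ a, 1 ≤ m a) (hsum : ∑ a, m a = N)
    (C : ZMod N → A) (hC : Admissible m C) (a : A) (hndvd : ¬ m a ∣ N) :
    (¬ ∃ d : ℕ, ∀ j : ZMod N, C j = a → cycleDist C j = d) ∧
    ∃ j j' : ZMod N, C j = a ∧ C j' = a ∧ cycleDist C j ≠ cycleDist C j' := by
  classical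
  have hfil : (Finset.univ.filter (fun j => C j = a)).Nonempty := by
    rw [← Finset.card_pos, hC a]; exact hm a
  obtain ⟨j0, hj0mem⟩ := hfil
  have hj0 : C j0 = a := (Finset.mem_filter.mp hj0mem).2
  have hsumd := sum_cycleDist C a ⟨j0, hj0⟩
  have part1 : ¬ ∃ d : ℕ, ∀ j : ZMod N, C j = a → cycleDist C j = d := by
    rintro ⟨d, hd⟩
    apply hndvd
    have : ∑ j ∈ Finset.univ.filter (fun j => C j = a), cycleDist C j = m a * d := by
      rw [Finset.sum_congr rfl (fun j hj => hd j (Finset.mem_filter.mp hj).2)]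
      simp [hC a, mul_comm]
    rw [this] at hsumd
    exact Dvd.intro d hsumd
  refine ⟨part1, ?_⟩
  by_contra hno
  push_neg at hno
  apply part1
  exact ⟨cycleDist C j0, fun j hj => hno j j0 hj hj0⟩
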